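/- arXiv:1010.2705 — 8 statements merged into one kernel-verified Lean document; each statement's English description precedes it below -/
import Mathlib

section
/- Let (X, ρ) and (Y, σ) be metric spaces, let f : X → Y be Lipschitz with constant C ≥ 0, let β ≥ 0, and let μ be a Borel measure on Y such that for every x ∈ X the normalizing integral Z(x) = ∫_Y e^{−β·σ(f(x),y)} dμ(y) is finite and strictly positive. Define the conventional exponential mechanism by C_x(T) = (∫_T e^{−β·σ(f(x),y)} dμ(y)) / Z(x) for Borel sets T ⊆ Y. Then C is (2Cβ)-differentially private: for all x, z ∈ X and all Borel T ⊆ Y, C_x(T) ≤ e^{2Cβ·ρ(x,z)} · C_z(T). -/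
open MeasureTheory ENNReal

/-- the conventional exponential mechanism built from a Lipschitz(C) function
`f`, a Borel measure `μ` with finite positive normalizing integrals, and parameter `β ≥ 0`
is `(2Cβ)`-differentially private. -/
theorem exp_mech_diff_private {X Y : Type*} [MetricSpace X] [MetricSpace Y]
    [MeasurableSpace Y] [BorelSpace Y]
    (f : X → Y) (C : ℝ) (hC : 0 ≤ C)
    (hf : ∀ x z : X, dist (f x) (f z) ≤ C * dist x z)
    (μ : Measure Y) (β : ℝ) (hβ : 0 ≤ β)
    (Z : X → ℝ≥0∞)
    (hZ : ∀ x, Z x = ∫⁻ y, ENNReal.ofReal (Real.exp (-β * dist (f x) y)) ∂μ)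
    (hZpos : ∀ x, 0 < Z x) (hZfin : ∀ x, Z x < ⊤)
    (x z : X) (T : Set Y) (hT : MeasurableSet T) :
    (∫⁻ y in T, ENNReal.ofReal (Real.exp (-β * dist (f x) y)) ∂μ) / Z x ≤
      ENNReal.ofReal (Real.exp (2 * C * β * dist x z)) *
        ((∫⁻ y in T, ENNReal.ofReal (Real.exp (-β * dist (f z) y)) ∂μ) / Z z) := by
  set k : ℝ≥0∞ := ENNReal.ofReal (Real.exp (C * β * dist x z)) with hk
  have hknet : k ≠ ⊤ := ofReal_ne_top
  set a := ∫⁻ y in T, ENNReal.ofReal (Real.exp (-β * dist (f x) y)) ∂μ with ha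
  set b := ∫⁻ y in T, ENNReal.ofReal (Real.exp (-β * dist (f z) y)) ∂μ with hb
  -- pointwise bound both ways
  have key : ∀ u v : X, ∀ y : Y,
      ENNReal.ofReal (Real.exp (-β * dist (f u) y)) ≤
        ENNReal.ofReal (Real.exp (C * β * dist u v)) *
          ENNReal.ofReal (Real.exp (-β * dist (f v) y)) := by
    intro u v y
    rw [← ENNReal.ofReal_mul (Real.exp_nonneg _), ← Real.exp_add]
    apply ENNReal.ofReal_le_ofReal
    apply Real.exp_le_exp.2
    have h1 : dist (f v) y - dist (f u) y ≤ dist (f u) (f v) := by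
      have := dist_triangle (f v) (f u) y
      rw [dist_comm (f v) (f u)] at this; linarith
    have h2 : dist (f u) (f v) ≤ C * dist u v := hf u v
    nlinarith [(dist_nonneg : (0:ℝ) ≤ dist u v)]
  have hab : a ≤ k * b := by
    rw [ha, hb, hk, ← lintegral_const_mul' _ _ ofReal_ne_top]
    exact lintegral_mono fun y => key x z y
  have hZZ : Z z ≤ k * Z x := by
    rw [hZ z, hZ x, hk, ← lintegral_const_mul' _ _ ofReal_ne_top]
    refine lintegral_mono fun y => ?_
    have := key z x y
    rwa [dist_comm z x] at this
  have hk2 : ENNReal.ofReal (Real.exp (2 * C * β * dist x z)) = k * k := by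
    rw [hk, ← ENNReal.ofReal_mul (Real.exp_nonneg _), ← Real.exp_add]
    ring_nf
  rw [hk2]
  have hZx0 := (hZpos x).ne'
  have hZxt := (hZfin x).ne
  have hZz0 := (hZpos z).ne'
  have hZzt := (hZfin z).ne
  rw [ENNReal.div_le_iff_le_mul (Or.inl hZx0) (Or.inl hZxt)]
  calc a ≤ k * b := hab
    _ = k * (b / Z z * Z z) := by rw [ENNReal.div_mul_cancel hZz0 hZzt]
    _ ≤ k * (b / Z z * (k * Z x)) := by gcongr
    _ = k * k * (b / Z z) * Z x := by ring
end

section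
/- Let (X, ρ) and (Y, σ) be metric spaces, let f : X → Y be any function, and let μ be a uniformly positive Borel probability measure on Y. Fix γ > 0 and δ ∈ (0,1), set m = inf_{y ∈ Y} μ(B(y, γ/2)) (so m > 0 and we assume δ·m < 1), and set β = (2/γ)·ln(1/(δ·m)). Then the conventional exponential mechanism C^{μ;β} is well defined and achieves (γ,δ)-utility: for every x ∈ X, C_x(B(f(x), γ)) ≥ 1 − δ, where B(y,r) denotes the open ball of radius r around y in (Y, σ). -/
open MeasureTheory

/-- for any function `f : X → Y`, a uniformly positive Borel probability
measure `μ` on `Y`, `γ > 0`, `δ ∈ (0,1)`, `m = inf_y μ(B(y,γ/2))` (with `m > 0`,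
`δ·m < 1`) and `β = (2/γ)·ln(1/(δ·m))`, the conventional exponential mechanism
`C^{μ;β}` is well defined and achieves `(γ,δ)`-utility. -/
theorem exp_mech_utility {X Y : Type*} [MetricSpace X] [MetricSpace Y]
    [MeasurableSpace Y] [BorelSpace Y]
    (f : X → Y) (μ : Measure Y) [IsProbabilityMeasure μ]
    (hμ : ∀ r > (0:ℝ), 0 < ⨅ y : Y, μ (Metric.ball y r))
    (γ δ : ℝ) (hγ : 0 < γ) (hδ : δ ∈ Set.Ioo (0:ℝ) 1)
    (m : ℝ) (hm : m = (⨅ y : Y, μ (Metric.ball y (γ / 2))).toReal)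
    (hm0 : 0 < m) (hδm : δ * m < 1)
    (β : ℝ) (hβ : β = (2 / γ) * Real.log (1 / (δ * m))) :
    (∀ x : X, (∫⁻ y, ENNReal.ofReal (Real.exp (-β * dist (f x) y)) ∂μ) ≠ 0 ∧
      (∫⁻ y, ENNReal.ofReal (Real.exp (-β * dist (f x) y)) ∂μ) ≠ ⊤) ∧
    (∀ x : X,
      ENNReal.ofReal (1 - δ) ≤
        (∫⁻ y in Metric.ball (f x) γ,
            ENNReal.ofReal (Real.exp (-β * dist (f x) y)) ∂μ) /
          (∫⁻ y, ENNReal.ofReal (Real.exp (-β * dist (f x) y)) ∂μ)) := by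
  obtain ⟨hδ0, hδ1⟩ := hδ
  have ha0 : 0 < δ * m := mul_pos hδ0 hm0
  have hβpos : 0 < β := by
    rw [hβ]
    exact mul_pos (by positivity) (Real.log_pos ((one_lt_div ha0).mpr hδm))
  have hexp_half : Real.exp (-β * (γ / 2)) = δ * m := by
    have h1 : -β * (γ / 2) = Real.log (δ * m) := by
      rw [hβ, one_div, Real.log_inv]; field_simp
    rw [h1, Real.exp_log ha0]
  have hexp_full : Real.exp (-β * γ) = (δ * m) ^ 2 := by
    have h1 : -β * γ = -β * (γ / 2) + -β * (γ / 2) := by ring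
    rw [h1, Real.exp_add, hexp_half, sq]
  have hmeas : ∀ x : X,
      Measurable fun y : Y => ENNReal.ofReal (Real.exp (-β * dist (f x) y)) := fun x =>
    (ENNReal.continuous_ofReal.comp (Real.continuous_exp.comp
      (continuous_const.mul (continuous_const.dist continuous_id)))).measurable
  have main : ∀ x : X,
      (∫⁻ y, ENNReal.ofReal (Real.exp (-β * dist (f x) y)) ∂μ) ≠ 0 ∧
      (∫⁻ y, ENNReal.ofReal (Real.exp (-β * dist (f x) y)) ∂μ) ≠ ⊤ ∧
      ENNReal.ofReal (1 - δ) ≤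
        (∫⁻ y in Metric.ball (f x) γ,
            ENNReal.ofReal (Real.exp (-β * dist (f x) y)) ∂μ) /
          (∫⁻ y, ENNReal.ofReal (Real.exp (-β * dist (f x) y)) ∂μ) := by
    intro x
    set g : Y → ENNReal := fun y => ENNReal.ofReal (Real.exp (-β * dist (f x) y)) with hg
    have hZ1 : (∫⁻ y, g y ∂μ) ≤ 1 := by
      calc (∫⁻ y, g y ∂μ) ≤ ∫⁻ _, 1 ∂μ := by
            apply lintegral_mono
            intro y
            have h0 : -β * dist (f x) y ≤ 0 := by
              have := mul_nonneg hβpos.le (dist_nonneg (x := f x) (y := y))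
              linarith
            simpa [hg] using ENNReal.ofReal_le_one.mpr (Real.exp_le_one_iff.mpr h0)
        _ = 1 := by simp
    have hZtop : (∫⁻ y, g y ∂μ) ≠ ⊤ := fun h => by simp [h] at hZ1
    have hμball : ENNReal.ofReal m ≤ μ (Metric.ball (f x) (γ / 2)) := by
      have hinf_ne : (⨅ y : Y, μ (Metric.ball y (γ / 2))) ≠ ⊤ :=
        ne_top_of_le_ne_top (measure_ne_top μ _) (iInf_le _ (f x))
      rw [hm, ENNReal.ofReal_toReal hinf_ne]
      exact iInf_le _ _
    have hN_lb : ENNReal.ofReal (δ * m * m) ≤ ∫⁻ y in Metric.ball (f x) γ, g y ∂μ := by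
      have h1 : ENNReal.ofReal (δ * m * m) ≤ ∫⁻ y in Metric.ball (f x) (γ / 2), g y ∂μ := by
        calc ENNReal.ofReal (δ * m * m)
            = ENNReal.ofReal (δ * m) * ENNReal.ofReal m := by
              rw [← ENNReal.ofReal_mul ha0.le]
          _ ≤ ENNReal.ofReal (δ * m) * μ (Metric.ball (f x) (γ / 2)) :=
              mul_le_mul_right hμball _
          _ = ∫⁻ _ in Metric.ball (f x) (γ / 2), ENNReal.ofReal (δ * m) ∂μ := by
              rw [setLIntegral_const]
          _ ≤ ∫⁻ y in Metric.ball (f x) (γ / 2), g y ∂μ := by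
              apply setLIntegral_mono (hmeas x)
              intro y hy
              have hd : dist (f x) y < γ / 2 := by
                rw [Metric.mem_ball, dist_comm] at hy
                exact hy
              rw [← hexp_half]
              apply ENNReal.ofReal_le_ofReal
              apply Real.exp_le_exp.mpr
              nlinarith
      exact h1.trans (lintegral_mono_set (Metric.ball_subset_ball (by linarith)))
    have hZ_lb : ENNReal.ofReal (δ * m * m) ≤ ∫⁻ y, g y ∂μ :=
      hN_lb.trans (setLIntegral_le_lintegral _ _)
    have hZ0 : (∫⁻ y, g y ∂μ) ≠ 0 := by
      have : (0 : ENNReal) < ENNReal.ofReal (δ * m * m) := ENNReal.ofReal_pos.mpr (by positivity)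
      exact (this.trans_le hZ_lb).ne'
    have hT : (∫⁻ y in (Metric.ball (f x) γ)ᶜ, g y ∂μ) ≤ ENNReal.ofReal ((δ * m) ^ 2) := by
      calc (∫⁻ y in (Metric.ball (f x) γ)ᶜ, g y ∂μ)
          ≤ ∫⁻ _ in (Metric.ball (f x) γ)ᶜ, ENNReal.ofReal ((δ * m) ^ 2) ∂μ := by
            apply setLIntegral_mono measurable_const
            intro y hy
            have hd : γ ≤ dist (f x) y := by
              rw [Set.mem_compl_iff, Metric.mem_ball, not_lt, dist_comm] at hy
              exact hy
            rw [← hexp_full]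
            apply ENNReal.ofReal_le_ofReal
            apply Real.exp_le_exp.mpr
            nlinarith
        _ = ENNReal.ofReal ((δ * m) ^ 2) * μ (Metric.ball (f x) γ)ᶜ := setLIntegral_const _ _
        _ ≤ ENNReal.ofReal ((δ * m) ^ 2) * 1 := mul_le_mul_right prob_le_one _
        _ = _ := mul_one _
    refine ⟨hZ0, hZtop, ?_⟩
    rw [ENNReal.le_div_iff_mul_le (Or.inl hZ0) (Or.inl hZtop)]
    have hsplit : (∫⁻ y, g y ∂μ) =
        (∫⁻ y in Metric.ball (f x) γ, g y ∂μ) + ∫⁻ y in (Metric.ball (f x) γ)ᶜ, g y ∂μ :=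
      (lintegral_add_compl _ measurableSet_ball).symm
    rw [hsplit, mul_add]
    have hTN : ENNReal.ofReal (1 - δ) * (∫⁻ y in (Metric.ball (f x) γ)ᶜ, g y ∂μ) ≤
        ENNReal.ofReal δ * ∫⁻ y in Metric.ball (f x) γ, g y ∂μ := by
      calc ENNReal.ofReal (1 - δ) * (∫⁻ y in (Metric.ball (f x) γ)ᶜ, g y ∂μ)
          ≤ 1 * (∫⁻ y in (Metric.ball (f x) γ)ᶜ, g y ∂μ) :=
            mul_le_mul_left (ENNReal.ofReal_le_one.mpr (by linarith)) _
        _ = ∫⁻ y in (Metric.ball (f x) γ)ᶜ, g y ∂μ := one_mul _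
        _ ≤ ENNReal.ofReal ((δ * m) ^ 2) := hT
        _ = ENNReal.ofReal δ * ENNReal.ofReal (δ * m * m) := by
            rw [← ENNReal.ofReal_mul hδ0.le]; ring_nf
        _ ≤ ENNReal.ofReal δ * ∫⁻ y in Metric.ball (f x) γ, g y ∂μ :=
            mul_le_mul_right hN_lb _
    calc ENNReal.ofReal (1 - δ) * (∫⁻ y in Metric.ball (f x) γ, g y ∂μ) +
          ENNReal.ofReal (1 - δ) * ∫⁻ y in (Metric.ball (f x) γ)ᶜ, g y ∂μ
        ≤ ENNReal.ofReal (1 - δ) * (∫⁻ y in Metric.ball (f x) γ, g y ∂μ) +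
          ENNReal.ofReal δ * ∫⁻ y in Metric.ball (f x) γ, g y ∂μ := add_le_add_right hTN _
      _ = (ENNReal.ofReal (1 - δ) + ENNReal.ofReal δ) * ∫⁻ y in Metric.ball (f x) γ, g y ∂μ :=
          (add_mul _ _ _).symm
      _ = 1 * ∫⁻ y in Metric.ball (f x) γ, g y ∂μ := by
          rw [← ENNReal.ofReal_add (by linarith) hδ0.le]; norm_num
      _ = _ := one_mul _
  exact ⟨fun x => ⟨(main x).1, (main x).2.1⟩, fun x => (main x).2.2⟩
end

section
/- Let (X, ρ) and (Y, σ) be metric spaces, let f : X → Y be 1-Lipschitz, and suppose there exists a uniformly positive Borel probability measure on Y. Then f is privacy-compatible: for every γ > 0 and every δ ∈ (0,1) there exist ε > 0 and a mechanism M : X → (Borel probability measures on Y) such that M achieves ε-differential privacy and (γ,δ)-utility, i.e. M_x(T) ≤ e^{ε·ρ(x,z)}·M_z(T) for all x, z ∈ X and Borel T ⊆ Y, and M_x(B(f(x),γ)) ≥ 1 − δ for all x ∈ X. -/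
open MeasureTheory

/-- if `f : X → Y` is 1-Lipschitz and there exists a uniformly positive
Borel probability measure on `Y`, then `f` is privacy-compatible: for every `γ > 0`
and `δ ∈ (0,1)` there is an `ε > 0` and a mechanism achieving `ε`-differential privacy
and `(γ,δ)`-utility. -/
theorem privacy_compatible_of_uniformly_positive {X Y : Type*}
    [MetricSpace X] [MetricSpace Y] [MeasurableSpace Y] [BorelSpace Y]
    (f : X → Y) (hf : ∀ x z : X, dist (f x) (f z) ≤ dist x z)
    (hpos : ∃ μ : Measure Y, IsProbabilityMeasure μ ∧
      ∀ r > (0:ℝ), 0 < ⨅ y : Y, μ (Metric.ball y r))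
    (γ δ : ℝ) (hγ : 0 < γ) (hδ : δ ∈ Set.Ioo (0:ℝ) 1) :
    ∃ ε > (0:ℝ), ∃ M : X → Measure Y,
      (∀ x, IsProbabilityMeasure (M x)) ∧
      (∀ x z : X, ∀ T : Set Y, MeasurableSet T →
        M x T ≤ ENNReal.ofReal (Real.exp (ε * dist x z)) * M z T) ∧
      (∀ x : X, ENNReal.ofReal (1 - δ) ≤ M x (Metric.ball (f x) γ)) := by
  obtain ⟨μ, hμ, hinf⟩ := hpos
  obtain ⟨hδ0, hδ1⟩ := hδ
  have hY : Nonempty Y := by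
    by_contra h
    rw [not_nonempty_iff] at h
    have h1 : μ Set.univ = 1 := hμ.measure_univ
    rw [Set.univ_eq_empty_iff.mpr h] at h1
    simp at h1
  set c : ENNReal := ⨅ y : Y, μ (Metric.ball y (γ/2)) with hcdef
  have hc0 : 0 < c := hinf (γ/2) (by linarith)
  have hcle : c ≤ 1 := by
    obtain ⟨y⟩ := hY
    exact le_trans (iInf_le _ y)
      (le_trans (measure_mono (Set.subset_univ _)) (le_of_eq hμ.measure_univ))
  have hcne : c ≠ ⊤ := ne_top_of_le_ne_top ENNReal.one_ne_top hcle
  have hcR : 0 < c.toReal := ENNReal.toReal_pos hc0.ne' hcne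
  set a : ℝ := (2/γ) * (1 + |Real.log (δ * c.toReal)|) with hadef
  have ha0 : 0 < a :=
    mul_pos (div_pos two_pos hγ) (by positivity)
  -- key real inequality
  have hkey : Real.exp (-(a * (γ/2))) ≤ δ * c.toReal := by
    have h1 : a * (γ/2) = 1 + |Real.log (δ * c.toReal)| := by
      rw [hadef]; field_simp
    rw [h1]
    have h2 : Real.exp (Real.log (δ * c.toReal)) = δ * c.toReal :=
      Real.exp_log (by positivity)
    calc Real.exp (-(1 + |Real.log (δ * c.toReal)|))
        ≤ Real.exp (Real.log (δ * c.toReal)) := by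
          apply Real.exp_le_exp.mpr
          have := neg_abs_le (Real.log (δ * c.toReal))
          linarith
      _ = δ * c.toReal := h2
  set g : X → Y → ENNReal :=
    fun x y => ENNReal.ofReal (Real.exp (-(a * dist y (f x)))) with hgdef
  have hgm : ∀ x, Measurable (g x) := by
    intro x
    apply Measurable.ennreal_ofReal
    fun_prop
  have hgle1 : ∀ x y, g x y ≤ 1 := by
    intro x y
    rw [hgdef]
    simp only
    rw [← ENNReal.ofReal_one]
    apply ENNReal.ofReal_le_ofReal
    rw [Real.exp_le_one_iff]
    have : 0 ≤ a * dist y (f x) := mul_nonneg ha0.le dist_nonneg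
    linarith
  set Z : X → ENNReal := fun x => ∫⁻ y, g x y ∂μ with hZdef
  have hZle1 : ∀ x, Z x ≤ 1 := by
    intro x
    calc ∫⁻ y, g x y ∂μ ≤ ∫⁻ _, 1 ∂μ := lintegral_mono (hgle1 x)
      _ = 1 := by simp
  have hZlb : ∀ x, ENNReal.ofReal (Real.exp (-(a * (γ/2)))) * c ≤ Z x := by
    intro x
    calc ENNReal.ofReal (Real.exp (-(a * (γ/2)))) * c
        ≤ ENNReal.ofReal (Real.exp (-(a * (γ/2)))) * μ (Metric.ball (f x) (γ/2)) := by
          gcongr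
          exact iInf_le _ (f x)
      _ = ∫⁻ _ in Metric.ball (f x) (γ/2), ENNReal.ofReal (Real.exp (-(a * (γ/2)))) ∂μ := by
          rw [setLIntegral_const]
      _ ≤ ∫⁻ y in Metric.ball (f x) (γ/2), g x y ∂μ := by
          apply setLIntegral_mono (hgm x)
          intro y hy
          apply ENNReal.ofReal_le_ofReal
          apply Real.exp_le_exp.mpr
          have hd : dist y (f x) < γ/2 := Metric.mem_ball.mp hy
          nlinarith [ha0]
      _ ≤ Z x := setLIntegral_le_lintegral _ _
  have hZ0 : ∀ x, Z x ≠ 0 := by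
    intro x
    have : (0:ENNReal) < ENNReal.ofReal (Real.exp (-(a * (γ/2)))) * c :=
      ENNReal.mul_pos (ENNReal.ofReal_pos.mpr (Real.exp_pos _)).ne' hc0.ne'
    exact (lt_of_lt_of_le this (hZlb x)).ne'
  have hZtop : ∀ x, Z x ≠ ⊤ :=
    fun x => ne_top_of_le_ne_top ENNReal.one_ne_top (hZle1 x)
  -- the mechanism
  set M : X → Measure Y := fun x => (Z x)⁻¹ • μ.withDensity (g x) with hMdef
  have hMapp : ∀ x T, MeasurableSet T → M x T = (Z x)⁻¹ * ∫⁻ y in T, g x y ∂μ := by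
    intro x T hT
    rw [hMdef]
    simp only [Measure.smul_apply, smul_eq_mul]
    rw [withDensity_apply _ hT]
  -- pointwise density comparisons
  have hptwise : ∀ x z y, g x y ≤ ENNReal.ofReal (Real.exp (a * dist x z)) * g z y := by
    intro x z y
    rw [hgdef]
    simp only
    rw [← ENNReal.ofReal_mul (Real.exp_nonneg _), ← Real.exp_add]
    apply ENNReal.ofReal_le_ofReal
    apply Real.exp_le_exp.mpr
    have h1 := dist_triangle y (f x) (f z)
    have h2 := hf x z
    have h3 := dist_triangle y (f z) (f x)
    nlinarith [ha0.le, dist_comm (f x) (f z)]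
  have hwd : ∀ x z (T : Set Y), MeasurableSet T →
      (∫⁻ y in T, g x y ∂μ) ≤ ENNReal.ofReal (Real.exp (a * dist x z)) * ∫⁻ y in T, g z y ∂μ := by
    intro x z T hT
    rw [← lintegral_const_mul _ (hgm z)]
    exact lintegral_mono fun y => hptwise x z y
  have hZcomp : ∀ x z, Z z ≤ ENNReal.ofReal (Real.exp (a * dist x z)) * Z x := by
    intro x z
    rw [hZdef]
    simp only
    rw [← lintegral_const_mul _ (hgm x)]
    apply lintegral_mono
    intro y
    have := hptwise z x y
    rwa [dist_comm z x] at this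
  refine ⟨2 * a, by linarith, M, ?_, ?_, ?_⟩
  · -- probability measure
    intro x
    constructor
    rw [hMapp x Set.univ MeasurableSet.univ, Measure.restrict_univ]
    exact ENNReal.inv_mul_cancel (hZ0 x) (hZtop x)
  · -- differential privacy
    intro x z T hT
    set E : ENNReal := ENNReal.ofReal (Real.exp (a * dist x z)) with hEdef
    have hE0 : E ≠ 0 := (ENNReal.ofReal_pos.mpr (Real.exp_pos _)).ne'
    have hEtop : E ≠ ⊤ := ENNReal.ofReal_ne_top
    have hinv : (Z x)⁻¹ ≤ E * (Z z)⁻¹ := by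
      have h1 : (E * Z x)⁻¹ ≤ (Z z)⁻¹ := ENNReal.inv_le_inv.mpr (hZcomp x z)
      have h2 : (E * Z x)⁻¹ = E⁻¹ * (Z x)⁻¹ := by
        rw [ENNReal.mul_inv (Or.inl hE0) (Or.inl hEtop)]
      rw [h2] at h1
      calc (Z x)⁻¹ = E * (E⁻¹ * (Z x)⁻¹) := by
            rw [← mul_assoc, ENNReal.mul_inv_cancel hE0 hEtop, one_mul]
        _ ≤ E * (Z z)⁻¹ := by gcongr
    have hEE : E * E = ENNReal.ofReal (Real.exp (2 * a * dist x z)) := by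
      rw [hEdef, ← ENNReal.ofReal_mul (Real.exp_nonneg _), ← Real.exp_add]
      ring_nf
    calc M x T = (Z x)⁻¹ * ∫⁻ y in T, g x y ∂μ := hMapp x T hT
      _ ≤ (E * (Z z)⁻¹) * (E * ∫⁻ y in T, g z y ∂μ) :=
          mul_le_mul' hinv (hwd x z T hT)
      _ = (E * E) * ((Z z)⁻¹ * ∫⁻ y in T, g z y ∂μ) := by ring
      _ = ENNReal.ofReal (Real.exp (2 * a * dist x z)) * M z T := by
          rw [hEE, hMapp z T hT]
  · -- utility
    intro x
    have hball : MeasurableSet (Metric.ball (f x) γ) := Metric.isOpen_ball.measurableSet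
    have hcompl : M x (Metric.ball (f x) γ)ᶜ ≤ ENNReal.ofReal δ := by
      have hbound : (∫⁻ y in (Metric.ball (f x) γ)ᶜ, g x y ∂μ) ≤ ENNReal.ofReal δ * Z x := by
        have step1 : (∫⁻ y in (Metric.ball (f x) γ)ᶜ, g x y ∂μ)
            ≤ ENNReal.ofReal (Real.exp (-(a * γ))) := by
          calc (∫⁻ y in (Metric.ball (f x) γ)ᶜ, g x y ∂μ)
              ≤ ∫⁻ _ in (Metric.ball (f x) γ)ᶜ, ENNReal.ofReal (Real.exp (-(a * γ))) ∂μ := by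
                apply setLIntegral_mono measurable_const
                intro y hy
                apply ENNReal.ofReal_le_ofReal
                apply Real.exp_le_exp.mpr
                have hd : γ ≤ dist y (f x) := by
                  by_contra hcon
                  exact hy (Metric.mem_ball.mpr (by linarith))
                nlinarith [ha0]
            _ = ENNReal.ofReal (Real.exp (-(a * γ))) * μ (Metric.ball (f x) γ)ᶜ := by
                rw [setLIntegral_const]
            _ ≤ ENNReal.ofReal (Real.exp (-(a * γ))) * 1 := by
                gcongr
                exact le_trans (measure_mono (Set.subset_univ _)) (le_of_eq hμ.measure_univ)
            _ = ENNReal.ofReal (Real.exp (-(a * γ))) := mul_one _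
        have step2 : ENNReal.ofReal (Real.exp (-(a * γ)))
            ≤ ENNReal.ofReal δ * (ENNReal.ofReal (Real.exp (-(a * (γ/2)))) * c) := by
          have hcR' : ENNReal.ofReal c.toReal = c := ENNReal.ofReal_toReal hcne
          rw [← hcR', ← ENNReal.ofReal_mul (Real.exp_nonneg _), ← ENNReal.ofReal_mul hδ0.le]
          apply ENNReal.ofReal_le_ofReal
          have hsplit : Real.exp (-(a * γ)) = Real.exp (-(a * (γ/2))) * Real.exp (-(a * (γ/2))) := by
            rw [← Real.exp_add]; ring_nf
          rw [hsplit]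
          calc Real.exp (-(a * (γ/2))) * Real.exp (-(a * (γ/2)))
              ≤ (δ * c.toReal) * Real.exp (-(a * (γ/2))) := by
                apply mul_le_mul_of_nonneg_right hkey (Real.exp_nonneg _)
            _ = δ * (Real.exp (-(a * (γ/2))) * c.toReal) := by ring
        calc (∫⁻ y in (Metric.ball (f x) γ)ᶜ, g x y ∂μ)
            ≤ ENNReal.ofReal δ * (ENNReal.ofReal (Real.exp (-(a * (γ/2)))) * c) :=
              le_trans step1 step2
          _ ≤ ENNReal.ofReal δ * Z x := by gcongr; exact hZlb x
      calc M x (Metric.ball (f x) γ)ᶜ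
          = (Z x)⁻¹ * ∫⁻ y in (Metric.ball (f x) γ)ᶜ, g x y ∂μ :=
            hMapp x _ hball.compl
        _ ≤ (Z x)⁻¹ * (ENNReal.ofReal δ * Z x) := by gcongr
        _ = ENNReal.ofReal δ * ((Z x)⁻¹ * Z x) := by ring
        _ = ENNReal.ofReal δ := by
            rw [ENNReal.inv_mul_cancel (hZ0 x) (hZtop x), mul_one]
    have hprob : IsProbabilityMeasure (M x) := by
      constructor
      rw [hMapp x Set.univ MeasurableSet.univ, Measure.restrict_univ]
      exact ENNReal.inv_mul_cancel (hZ0 x) (hZtop x)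
    have htot : M x (Metric.ball (f x) γ) + M x (Metric.ball (f x) γ)ᶜ = 1 := by
      rw [measure_add_measure_compl hball]
      exact hprob.measure_univ
    have h1 : (1:ENNReal) ≤ M x (Metric.ball (f x) γ) + ENNReal.ofReal δ := by
      rw [← htot]; gcongr
    calc ENNReal.ofReal (1 - δ) = 1 - ENNReal.ofReal δ := by
          rw [ENNReal.ofReal_sub _ hδ0.le, ENNReal.ofReal_one]
      _ ≤ M x (Metric.ball (f x) γ) := by
          rw [tsub_le_iff_right]
          exact h1
end

section
/- Let (Y, σ) be a nonempty metric space that is totally bounded (equivalently, whose completion is compact). Then there exists a uniformly positive Borel probability measure μ on Y, i.e. a Borel probability measure μ such that for every r > 0 there is a constant c > 0 with μ(B(y,r)) ≥ c for every y ∈ Y. -/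
open MeasureTheory ENNReal

/-- a nonempty totally bounded metric space carries a uniformly positive
Borel probability measure. -/
theorem exists_uniformly_positive_of_totallyBounded {Y : Type*} [MetricSpace Y]
    [Nonempty Y] [MeasurableSpace Y] [BorelSpace Y]
    (hY : TotallyBounded (Set.univ : Set Y)) :
    ∃ μ : Measure Y, IsProbabilityMeasure μ ∧
      ∀ r > (0:ℝ), ∃ c : ℝ≥0∞, 0 < c ∧ ∀ y : Y, c ≤ μ (Metric.ball y r) := by
  -- for each n, a finite (1/(n+1))-net
  have hnet : ∀ n : ℕ, ∃ F : Finset Y,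
      (Set.univ : Set Y) ⊆ ⋃ x ∈ (F : Set Y), Metric.ball x (1 / (n + 1)) := by
    intro n
    rw [Metric.totallyBounded_iff] at hY
    obtain ⟨t, ht, hcov⟩ := hY (1 / (n + 1)) (by positivity)
    exact ⟨ht.toFinset, by simpa using hcov⟩
  choose F hF using hnet
  have hFne : ∀ n, (F n).Nonempty := by
    intro n
    obtain ⟨y⟩ := ‹Nonempty Y›
    obtain ⟨x, hx, -⟩ := Set.mem_iUnion₂.1 (hF n (Set.mem_univ y))
    exact ⟨x, hx⟩
  set ν : ℕ → Measure Y := fun n =>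
    ((F n).card : ℝ≥0∞)⁻¹ • ∑ x ∈ F n, Measure.dirac x with hν
  have hcard_ne : ∀ n, ((F n).card : ℝ≥0∞) ≠ 0 := by
    intro n
    simpa [Finset.card_eq_zero] using (hFne n).ne_empty
  have hν_univ : ∀ n, ν n Set.univ = 1 := by
    intro n
    simp only [hν, Measure.smul_apply, smul_eq_mul, Measure.finset_sum_apply,
      Measure.dirac_apply_of_mem (Set.mem_univ _), Finset.sum_const, nsmul_eq_mul, mul_one]
    exact ENNReal.inv_mul_cancel (hcard_ne n) (by simp)
  refine ⟨Measure.sum (fun n => ((2 : ℝ≥0∞)⁻¹ ^ (n + 1)) • ν n), ?_, ?_⟩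
  · constructor
    rw [Measure.sum_apply _ MeasurableSet.univ]
    simp only [Measure.smul_apply, smul_eq_mul, hν_univ, mul_one]
    rw [show (fun n : ℕ => (2 : ℝ≥0∞)⁻¹ ^ (n + 1)) = fun n => (2 : ℝ≥0∞)⁻¹ * (2 : ℝ≥0∞)⁻¹ ^ n
        from funext fun n => by ring]
    rw [ENNReal.tsum_mul_left, ENNReal.tsum_geometric]
    rw [ENNReal.one_sub_inv_two, inv_inv]
    exact ENNReal.inv_mul_cancel (by norm_num) (by norm_num)
  · intro r hr
    obtain ⟨n, hn⟩ := exists_nat_one_div_lt hr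
    refine ⟨(2 : ℝ≥0∞)⁻¹ ^ (n + 1) * ((F n).card : ℝ≥0∞)⁻¹, ?_, ?_⟩
    · apply ENNReal.mul_pos
      · exact (pow_ne_zero _ (by norm_num))
      · simp
    · intro y
      -- find a net point in ball y r
      obtain ⟨x, hxF, hxy⟩ := Set.mem_iUnion₂.1 (hF n (Set.mem_univ y))
      have hx_ball : x ∈ Metric.ball y r := by
        rw [Metric.mem_ball] at hxy ⊢
        rw [dist_comm]
        exact hxy.trans hn
      have hνn : ((F n).card : ℝ≥0∞)⁻¹ ≤ ν n (Metric.ball y r) := by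
        simp only [hν, Measure.smul_apply, smul_eq_mul, Measure.finset_sum_apply]
        have h1 : (1 : ℝ≥0∞) ≤ ∑ z ∈ F n, Measure.dirac z (Metric.ball y r) := by
          calc (1 : ℝ≥0∞) = Measure.dirac x (Metric.ball y r) := by
                rw [Measure.dirac_apply_of_mem hx_ball]
            _ ≤ _ := Finset.single_le_sum (f := fun z => Measure.dirac z (Metric.ball y r)) (fun _ _ => zero_le) (Finset.mem_coe.1 hxF)
        calc ((F n).card : ℝ≥0∞)⁻¹ = ((F n).card : ℝ≥0∞)⁻¹ * 1 := (mul_one _).symm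
          _ ≤ _ := mul_le_mul_right h1 _
      calc (2 : ℝ≥0∞)⁻¹ ^ (n + 1) * ((F n).card : ℝ≥0∞)⁻¹
            ≤ (2 : ℝ≥0∞)⁻¹ ^ (n + 1) * ν n (Metric.ball y r) := mul_le_mul_right hνn _
        _ = ((2 : ℝ≥0∞)⁻¹ ^ (n + 1) • ν n) (Metric.ball y r) := by
            simp [Measure.smul_apply]
        _ ≤ _ := Measure.le_sum _ n _
end

section
/- Let (X, ρ) and (Y, σ) be metric spaces with ρ(x,z) ≤ 1 for all x, z ∈ X, let f : X → Y, and suppose there exist r > 0 and a sequence of points x_1, x_2, … in X such that the open balls B(f(x_i), r) ⊆ Y are pairwise disjoint. Then for every mechanism M : X → (Borel probability measures on Y) satisfying M_x(B(f(x), r)) ≥ 1/2 for all x ∈ X, and for every α > 0, M fails α-differential privacy: there exist indices and a Borel set T ⊆ Y — namely some of the sets B(f(x_i), r) — with M_{x_i}(T) > e^{α·ρ(x_i, x_1)} · M_{x_1}(T). -/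
open MeasureTheory ENNReal

/-- if `X` has diameter at most `1`, and there is a sequence of points whose
images under `f` are centers of pairwise disjoint balls of radius `r`, then any mechanism
achieving `r`-utility with probability at least `1/2` fails `α`-differential privacy for
every `α > 0`, witnessed on one of the balls `B(f(x_i), r)`. -/
theorem no_privacy_of_disjoint_balls {X Y : Type*} [MetricSpace X] [MetricSpace Y]
    [MeasurableSpace Y] [BorelSpace Y]
    (hX : ∀ x z : X, dist x z ≤ 1)
    (f : X → Y) (r : ℝ) (hr : 0 < r) (x : ℕ → X)
    (hdisj : Pairwise fun i j => Disjoint (Metric.ball (f (x i)) r) (Metric.ball (f (x j)) r))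
    (M : X → Measure Y) (hM : ∀ a, IsProbabilityMeasure (M a))
    (hut : ∀ a : X, (1 : ℝ≥0∞) / 2 ≤ M a (Metric.ball (f a) r))
    (α : ℝ) (hα : 0 < α) :
    ∃ i : ℕ,
      ENNReal.ofReal (Real.exp (α * dist (x i) (x 0))) *
          M (x 0) (Metric.ball (f (x i)) r) <
        M (x i) (Metric.ball (f (x i)) r) := by
  set c : ℝ≥0∞ := ENNReal.ofReal (Real.exp (-α)) / 2 with hc
  have hc0 : c ≠ 0 := by
    simp [hc, ENNReal.div_eq_zero_iff, ENNReal.ofReal_eq_zero, Real.exp_pos,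
      not_le.mpr (Real.exp_pos (-α))]
  have key : ∃ i, M (x 0) (Metric.ball (f (x i)) r) < c := by
    by_contra h
    push_neg at h
    have hsum : ∑' i : ℕ, M (x 0) (Metric.ball (f (x i)) r) ≤ 1 := by
      rw [← measure_iUnion hdisj fun i => measurableSet_ball]
      exact prob_le_one
    have htop : (⊤ : ℝ≥0∞) ≤ 1 := by
      calc (⊤ : ℝ≥0∞) = ∑' _ : ℕ, c := (ENNReal.tsum_const_eq_top_of_ne_zero hc0).symm
        _ ≤ ∑' i : ℕ, M (x 0) (Metric.ball (f (x i)) r) := ENNReal.tsum_le_tsum h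
        _ ≤ 1 := hsum
    simp at htop
  obtain ⟨i, hi⟩ := key
  refine ⟨i, ?_⟩
  have hexp0 : ENNReal.ofReal (Real.exp α) ≠ 0 := by
    simp [ENNReal.ofReal_eq_zero, not_le.mpr (Real.exp_pos α)]
  have hexpt : ENNReal.ofReal (Real.exp α) ≠ ⊤ := ENNReal.ofReal_ne_top
  calc ENNReal.ofReal (Real.exp (α * dist (x i) (x 0))) *
          M (x 0) (Metric.ball (f (x i)) r)
      ≤ ENNReal.ofReal (Real.exp α) * M (x 0) (Metric.ball (f (x i)) r) := by
        gcongr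
        nlinarith [hX (x i) (x 0), dist_nonneg (x := x i) (y := x 0)]
    _ < ENNReal.ofReal (Real.exp α) * c := by
        exact (ENNReal.mul_lt_mul_iff_right hexp0 hexpt).mpr hi
    _ = ENNReal.ofReal (Real.exp α * Real.exp (-α)) / 2 := by
        rw [ENNReal.ofReal_mul (le_of_lt (Real.exp_pos α)), hc, mul_div_assoc]
    _ = 1 / 2 := by rw [← Real.exp_add]; simp
    _ ≤ M (x i) (Metric.ball (f (x i)) r) := hut (x i)
end

section
/- Let (X, ρ) and (Y, σ) be metric spaces with X nonempty and ρ(x,z) ≤ 1 for all x, z ∈ X, and let f : X → Y be 1-Lipschitz. Then the following are equivalent: (a) f is privacy-compatible, i.e. for every γ > 0 and δ ∈ (0,1) there exist ε > 0 and a mechanism M : X → (Borel probability measures on Y) achieving both ε-differential privacy and (γ,δ)-utility; (b) the image f(X), as a subspace of (Y,σ), is totally bounded (equivalently, its completion is compact). -/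
open MeasureTheory

/-- for a 1-Lipschitz `f : X → Y` on a nonempty `X` of diameter at most `1`,
`f` is privacy-compatible if and only if its image `f(X)` is totally bounded. -/
theorem privacy_compatible_iff_totallyBounded {X Y : Type*}
    [MetricSpace X] [MetricSpace Y] [Nonempty X] [MeasurableSpace Y] [BorelSpace Y]
    (hX : ∀ x z : X, dist x z ≤ 1)
    (f : X → Y) (hf : ∀ x z : X, dist (f x) (f z) ≤ dist x z) :
    (∀ γ > (0:ℝ), ∀ δ ∈ Set.Ioo (0:ℝ) 1, ∃ ε > (0:ℝ), ∃ M : X → Measure Y,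
      (∀ x, IsProbabilityMeasure (M x)) ∧
      (∀ x z : X, ∀ T : Set Y, MeasurableSet T →
        M x T ≤ ENNReal.ofReal (Real.exp (ε * dist x z)) * M z T) ∧
      (∀ x : X, ENNReal.ofReal (1 - δ) ≤ M x (Metric.ball (f x) γ))) ↔
    TotallyBounded (Set.range f) := by
  constructor
  · -- privacy-compatible → totally bounded
    intro h
    classical
    by_contra hTB
    rw [Metric.totallyBounded_iff] at hTB
    push_neg at hTB
    obtain ⟨r, hr, hsep⟩ := hTB
    have key : ∀ t : Finset Y, ∃ x : X, ∀ y ∈ t, r ≤ dist (f x) y := by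
      intro t
      have h2 := hsep (t : Set Y) t.finite_toSet
      rw [Set.not_subset] at h2
      obtain ⟨yy, hyy, hnot⟩ := h2
      obtain ⟨x, rfl⟩ := hyy
      refine ⟨x, fun y hy => ?_⟩
      by_contra hlt
      push_neg at hlt
      exact hnot (Set.mem_biUnion hy (Metric.mem_ball.mpr hlt))
    set g : Finset Y → X := fun t => (key t).choose with hgdef
    have hg : ∀ t : Finset Y, ∀ y ∈ t, r ≤ dist (f (g t)) y := fun t => (key t).choose_spec
    set v : ℕ → Finset Y := fun n => Nat.rec ∅ (fun _ t => insert (f (g t)) t) n with hvdef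
    set u : ℕ → X := fun n => g (v n) with hudef
    have hv : ∀ n, v (n+1) = insert (f (u n)) (v n) := fun n => rfl
    have hmono : ∀ m n, m ≤ n → v m ⊆ v n := by
      intro m n hmn
      induction hmn with
      | refl => exact subset_rfl
      | step h ih => exact ih.trans (by rw [hv]; exact Finset.subset_insert _ _)
    have hmem : ∀ m n, m < n → f (u m) ∈ v n :=
      fun m n hlt => hmono (m+1) n hlt (by rw [hv]; exact Finset.mem_insert_self _ _)
    have hsep' : ∀ m n, m < n → r ≤ dist (f (u n)) (f (u m)) :=
      fun m n hlt => hg (v n) _ (hmem m n hlt)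
    obtain ⟨ε, hε, M, hprob, hdp, hutil⟩ :=
      h (r/2) (by positivity) (1/2) ⟨by norm_num, by norm_num⟩
    set B : ℕ → Set Y := fun k => Metric.ball (f (u k)) (r/2) with hBdef
    have hdisj : Pairwise (Function.onFun Disjoint B) := by
      intro m n hmn
      rcases hmn.lt_or_gt with hlt | hlt
      · exact (Metric.ball_disjoint_ball (by linarith [hsep' m n hlt, dist_comm (f (u n)) (f (u m))]))
      · exact (Metric.ball_disjoint_ball (by linarith [hsep' n m hlt, dist_comm (f (u m)) (f (u n))])).symm
    haveI := hprob (u 0)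
    set μ := M (u 0) with hμdef
    have hb : ∀ k, ENNReal.ofReal ((1/2) * Real.exp (-ε)) ≤ μ (B k) := by
      intro k
      have h1 : ENNReal.ofReal (1 - 1/2) ≤ M (u k) (B k) := hutil (u k)
      have h2 : M (u k) (B k) ≤ ENNReal.ofReal (Real.exp (ε * dist (u k) (u 0))) * μ (B k) :=
        hdp (u k) (u 0) (B k) measurableSet_ball
      have h3 : Real.exp (ε * dist (u k) (u 0)) ≤ Real.exp ε := by
        apply Real.exp_le_exp.mpr
        nlinarith [hX (u k) (u 0), dist_nonneg (x := u k) (y := u 0)]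
      have h4 : ENNReal.ofReal (1/2) ≤ ENNReal.ofReal (Real.exp ε) * μ (B k) := by
        calc ENNReal.ofReal (1/2) = ENNReal.ofReal (1 - 1/2) := by norm_num
        _ ≤ M (u k) (B k) := h1
        _ ≤ ENNReal.ofReal (Real.exp (ε * dist (u k) (u 0))) * μ (B k) := h2
        _ ≤ ENNReal.ofReal (Real.exp ε) * μ (B k) :=
            mul_le_mul_left (ENNReal.ofReal_le_ofReal h3) _
      calc ENNReal.ofReal ((1/2) * Real.exp (-ε))
          = ENNReal.ofReal (Real.exp (-ε)) * ENNReal.ofReal (1/2) := by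
            rw [← ENNReal.ofReal_mul (Real.exp_nonneg _)]; ring_nf
        _ ≤ ENNReal.ofReal (Real.exp (-ε)) * (ENNReal.ofReal (Real.exp ε) * μ (B k)) :=
            mul_le_mul_right h4 _
        _ = ENNReal.ofReal (Real.exp (-ε) * Real.exp ε) * μ (B k) := by
            rw [← mul_assoc, ← ENNReal.ofReal_mul (Real.exp_nonneg _)]
        _ = μ (B k) := by rw [← Real.exp_add]; simp
    have hle1 : (∑' k, μ (B k)) ≤ 1 := by
      rw [← measure_iUnion hdisj (fun k => measurableSet_ball)]
      exact prob_le_one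
    have htop : (⊤ : ENNReal) ≤ ∑' k : ℕ, μ (B k) := by
      have hne : ENNReal.ofReal ((1/2) * Real.exp (-ε)) ≠ 0 := by
        simp only [ne_eq, ENNReal.ofReal_eq_zero, not_le]
        positivity
      calc (⊤ : ENNReal) = ∑' _ : ℕ, ENNReal.ofReal ((1/2) * Real.exp (-ε)) :=
            (ENNReal.tsum_const_eq_top_of_ne_zero hne).symm
        _ ≤ ∑' k : ℕ, μ (B k) := ENNReal.tsum_le_tsum hb
    exact absurd (le_trans htop hle1) (by simp)
  · -- totally bounded → privacy-compatible
    intro hTB γ hγ δ hδ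
    obtain ⟨hδ0, hδ1⟩ := hδ
    obtain ⟨t, htfin, htcov⟩ := (Metric.totallyBounded_iff.mp hTB) (γ/2) (by positivity)
    classical
    set s : Finset Y := htfin.toFinset with hsdef
    have hs : ∀ x : X, ∃ i ∈ s, dist (f x) i < γ/2 := by
      intro x
      have hx : f x ∈ ⋃ y ∈ t, Metric.ball y (γ/2) := htcov ⟨x, rfl⟩
      simp only [Set.mem_iUnion] at hx
      obtain ⟨i, hi, hball⟩ := hx
      exact ⟨i, htfin.mem_toFinset.mpr hi, Metric.mem_ball.mp hball⟩
    have hsne : s.Nonempty := by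
      obtain ⟨i, hi, _⟩ := hs (Classical.arbitrary X); exact ⟨i, hi⟩
    set n : ℕ := s.card with hndef
    have hn : 1 ≤ (n:ℝ) := by exact_mod_cast Finset.card_pos.mpr hsne
    have hnδ : 1 < (n:ℝ)/δ := by rw [lt_div_iff₀ hδ0]; linarith
    set c : ℝ := (2/γ) * Real.log (n/δ) with hcdef
    have hc : 0 < c := mul_pos (by positivity) (Real.log_pos hnδ)
    have hcγ : Real.exp (-(c*(γ/2))) = δ/(n:ℝ) := by
      have h1 : c * (γ/2) = Real.log ((n:ℝ)/δ) := by
        rw [hcdef]; field_simp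
      rw [h1, Real.exp_neg, Real.exp_log (by positivity)]
      rw [inv_div]
    set w : X → Y → ℝ := fun x i => Real.exp (-(c * dist (f x) i)) with hwdef
    have hwpos : ∀ x i, 0 < w x i := fun _ _ => Real.exp_pos _
    set Z : X → ℝ := fun x => ∑ i ∈ s, w x i with hZdef
    have hZpos : ∀ x, 0 < Z x := fun x => Finset.sum_pos (fun i _ => hwpos x i) hsne
    set p : X → Y → ℝ := fun x i => w x i / Z x with hpdef
    have hppos : ∀ x i, 0 < p x i := fun x i => div_pos (hwpos x i) (hZpos x)
    have hpsum : ∀ x, ∑ i ∈ s, p x i = 1 := by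
      intro x
      have : ∑ i ∈ s, p x i = (∑ i ∈ s, w x i) / Z x := by
        rw [Finset.sum_div]
      rw [this]
      exact div_self (hZpos x).ne'
    set M : X → Measure Y := fun x => ∑ i ∈ s, (ENNReal.ofReal (p x i)) • Measure.dirac i
      with hMdef
    have hM : ∀ x (T : Set Y), MeasurableSet T →
        M x T = ∑ i ∈ s, ENNReal.ofReal (p x i) * T.indicator 1 i := by
      intro x T hT
      rw [hMdef]
      rw [Measure.finset_sum_apply]
      refine Finset.sum_congr rfl fun i _ => ?_
      rw [Measure.smul_apply, Measure.dirac_apply' _ hT, smul_eq_mul]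
    have step : ∀ x z : X, ∀ i : Y, w x i ≤ Real.exp (c * dist x z) * w z i := by
      intro x z i
      show Real.exp (-(c * dist (f x) i)) ≤
        Real.exp (c * dist x z) * Real.exp (-(c * dist (f z) i))
      rw [← Real.exp_add]
      apply Real.exp_le_exp.mpr
      have htri : dist (f z) i ≤ dist (f z) (f x) + dist (f x) i := dist_triangle _ _ _
      have hd : dist (f z) (f x) ≤ dist x z := by
        have h0 := hf z x
        rwa [dist_comm z x] at h0
      nlinarith [hc.le]
    have hZle : ∀ x z : X, Z z ≤ Real.exp (c * dist x z) * Z x := by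
      intro x z
      show (∑ i ∈ s, w z i) ≤ Real.exp (c * dist x z) * ∑ i ∈ s, w x i
      rw [Finset.mul_sum]
      refine Finset.sum_le_sum fun j _ => ?_
      have h1 := step z x j
      rwa [dist_comm z x] at h1
    have keyp : ∀ x z : X, ∀ i : Y, p x i ≤ Real.exp (2*c * dist x z) * p z i := by
      intro x z i
      have h1 := step x z i
      have h2 := hZle x z
      have hE : Real.exp (c*dist x z) * Real.exp (c*dist x z) = Real.exp (2*c*dist x z) := by
        rw [← Real.exp_add]; ring_nf
      have hmul : w x i * Z z ≤ (Real.exp (c*dist x z) * w z i) * (Real.exp (c*dist x z) * Z x) :=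
        mul_le_mul h1 h2 (hZpos z).le (by positivity)
      show w x i / Z x ≤ Real.exp (2*c*dist x z) * (w z i / Z z)
      rw [← mul_div_assoc, div_le_div_iff₀ (hZpos x) (hZpos z)]
      have heq : Real.exp (c*dist x z) * w z i * (Real.exp (c*dist x z) * Z x)
          = Real.exp (2*c*dist x z) * w z i * Z x := by rw [← hE]; ring
      linarith
    refine ⟨2*c, by positivity, M, ?_, ?_, ?_⟩
    · intro x
      constructor
      rw [hM x Set.univ MeasurableSet.univ]
      simp only [Set.indicator_univ, Pi.one_apply, mul_one]
      rw [← ENNReal.ofReal_sum_of_nonneg (fun i _ => (hppos x i).le), hpsum x,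
        ENNReal.ofReal_one]
    · intro x z T hT
      rw [hM x T hT, hM z T hT, Finset.mul_sum]
      refine Finset.sum_le_sum fun i _ => ?_
      have hle : ENNReal.ofReal (p x i) ≤
          ENNReal.ofReal (Real.exp (2*c * dist x z)) * ENNReal.ofReal (p z i) := by
        rw [← ENNReal.ofReal_mul (Real.exp_nonneg _)]
        exact ENNReal.ofReal_le_ofReal (keyp x z i)
      calc ENNReal.ofReal (p x i) * T.indicator 1 i
          ≤ (ENNReal.ofReal (Real.exp (2*c * dist x z)) * ENNReal.ofReal (p z i)) *
              T.indicator 1 i := mul_le_mul_left hle _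
        _ = ENNReal.ofReal (Real.exp (2*c * dist x z)) *
              (ENNReal.ofReal (p z i) * T.indicator 1 i) := by rw [mul_assoc]
    · intro x
      rw [hM x _ measurableSet_ball]
      have hsplit : ∑ i ∈ s, ENNReal.ofReal (p x i) * (Metric.ball (f x) γ).indicator 1 i
          = ENNReal.ofReal (∑ i ∈ s.filter (fun i => i ∈ Metric.ball (f x) γ), p x i) := by
        rw [ENNReal.ofReal_sum_of_nonneg (fun i _ => (hppos x i).le), Finset.sum_filter]
        refine Finset.sum_congr rfl fun i _ => ?_
        by_cases hi : i ∈ Metric.ball (f x) γ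
        · simp [Set.indicator_of_mem hi, hi]
        · simp [Set.indicator_of_notMem hi, hi]
      rw [hsplit]
      apply ENNReal.ofReal_le_ofReal
      obtain ⟨i0, hi0s, hi0⟩ := hs x
      have hZlow : Real.exp (-(c*(γ/2))) ≤ Z x := by
        have hw0 : Real.exp (-(c*(γ/2))) ≤ w x i0 := by
          apply Real.exp_le_exp.mpr
          have : c * dist (f x) i0 ≤ c * (γ/2) :=
            mul_le_mul_of_nonneg_left hi0.le hc.le
          linarith
        exact hw0.trans (Finset.single_le_sum (fun j _ => (hwpos x j).le) hi0s)
      have hbad : ∀ i ∈ s.filter (fun i => i ∉ Metric.ball (f x) γ), p x i ≤ δ/(n:ℝ) := by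
        intro i hi
        rw [Finset.mem_filter] at hi
        have hdist : γ ≤ dist (f x) i := by
          have h2 := hi.2
          rw [Metric.mem_ball, not_lt, dist_comm] at h2
          exact h2
        have hw : w x i ≤ Real.exp (-(c*γ)) := by
          apply Real.exp_le_exp.mpr
          have : c * γ ≤ c * dist (f x) i := mul_le_mul_of_nonneg_left hdist hc.le
          linarith
        calc p x i ≤ Real.exp (-(c*γ)) / Real.exp (-(c*(γ/2))) :=
              div_le_div₀ (Real.exp_nonneg _) hw (Real.exp_pos _) hZlow
          _ = Real.exp (-(c*γ) - (-(c*(γ/2)))) := (Real.exp_sub _ _).symm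
          _ = Real.exp (-(c*(γ/2))) := by congr 1; ring
          _ = δ/(n:ℝ) := hcγ
      have hbadsum : ∑ i ∈ s.filter (fun i => i ∉ Metric.ball (f x) γ), p x i ≤ δ := by
        have hcard : (((s.filter (fun i => i ∉ Metric.ball (f x) γ)).card) : ℝ) ≤ (n:ℝ) := by
          exact_mod_cast Finset.card_filter_le s _
        calc ∑ i ∈ s.filter (fun i => i ∉ Metric.ball (f x) γ), p x i
            ≤ ((s.filter (fun i => i ∉ Metric.ball (f x) γ)).card) • (δ/(n:ℝ)) :=
              Finset.sum_le_card_nsmul _ _ _ hbad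
          _ = (((s.filter (fun i => i ∉ Metric.ball (f x) γ)).card) : ℝ) * (δ/(n:ℝ)) := by
              rw [nsmul_eq_mul]
          _ ≤ (n:ℝ) * (δ/(n:ℝ)) :=
              mul_le_mul_of_nonneg_right hcard
                (div_nonneg hδ0.le (le_trans zero_le_one hn))
          _ = δ := by
              rw [mul_comm, div_mul_cancel₀]
              linarith
      have hgood := Finset.sum_filter_add_sum_filter_not s
        (fun i => i ∈ Metric.ball (f x) γ) (p x)
      have h1 := hpsum x
      linarith
end

section
/- Let (X, ρ) and (Y, σ) be metric spaces with X nonempty and ρ(x,z) ≤ 1 for all x, z ∈ X, and let f : X → Y be 1-Lipschitz. Then f is privacy-compatible (for every γ > 0 and δ ∈ (0,1) there exist ε > 0 and a mechanism achieving ε-differential privacy and (γ,δ)-utility) if and only if there exists a uniformly positive Borel probability measure on the subspace f(X) of (Y,σ). -/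
open MeasureTheory
open scoped ENNReal

lemma bwd_aux {X Y : Type*}
    [MetricSpace X] [MetricSpace Y] [Nonempty X] [MeasurableSpace Y] [BorelSpace Y]
    (hX : ∀ x z : X, dist x z ≤ 1)
    (f : X → Y) (hf : ∀ x z : X, dist (f x) (f z) ≤ dist x z)
    (μ : Measure (Set.range f)) (hμp : IsProbabilityMeasure μ)
    (hpos : ∀ r > (0:ℝ), 0 < ⨅ y : Set.range f, μ (Metric.ball y r)) :
    ∀ γ > (0:ℝ), ∀ δ ∈ Set.Ioo (0:ℝ) 1, ∃ ε > (0:ℝ), ∃ M : X → Measure Y,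
      (∀ x, IsProbabilityMeasure (M x)) ∧
      (∀ x z : X, ∀ T : Set Y, MeasurableSet T →
        M x T ≤ ENNReal.ofReal (Real.exp (ε * dist x z)) * M z T) ∧
      (∀ x : X, ENNReal.ofReal (1 - δ) ≤ M x (Metric.ball (f x) γ)) := by
  intro γ hγ δ hδ
  obtain ⟨hδ0, hδ1⟩ := hδ
  -- the uniform positivity constant at radius γ/2
  set c : ℝ≥0∞ := ⨅ y : Set.range f, μ (Metric.ball y (γ/2)) with hcdef
  have hc : 0 < c := hpos _ (by positivity)
  have hc1 : c ≤ 1 := by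
    have x0 : X := Classical.arbitrary X
    exact le_trans (iInf_le _ ⟨f x0, x0, rfl⟩) prob_le_one
  have hctop : c ≠ ∞ := (lt_of_le_of_lt hc1 ENNReal.one_lt_top).ne
  set ct : ℝ := c.toReal with hctdef
  have hct : 0 < ct := ENNReal.toReal_pos hc.ne' hctop
  have hct1 : ct ≤ 1 := by
    have := ENNReal.toReal_mono ENNReal.one_ne_top hc1
    simpa using this
  -- choice of the exponent scale k
  set k : ℝ := (2/γ) * (1 - Real.log (δ * ct)) with hkdef
  have hdc1 : δ * ct ≤ 1 := by nlinarith
  have hdc0 : 0 < δ * ct := by positivity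
  have hk : 0 < k := by
    have hlog : Real.log (δ * ct) ≤ 0 := Real.log_nonpos hdc0.le hdc1
    apply mul_pos (by positivity)
    linarith
  have hkey : Real.exp (-(k * (γ/2))) ≤ δ * ct := by
    have h1 : k * (γ/2) = 1 - Real.log (δ * ct) := by
      rw [hkdef]; field_simp
    rw [h1, show -(1 - Real.log (δ * ct)) = Real.log (δ * ct) + (-1) by ring,
      Real.exp_add, Real.exp_log hdc0]
    nlinarith [Real.exp_pos (-1:ℝ), Real.exp_le_one_iff.2 (by norm_num : (-1:ℝ) ≤ 0)]
  -- push μ forward to Y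
  set ν : Measure Y := μ.map Subtype.val with hνdef
  haveI hν : IsProbabilityMeasure ν :=
    Measure.isProbabilityMeasure_map measurable_subtype_coe.aemeasurable
  have hνball : ∀ x : X, c ≤ ν (Metric.ball (f x) (γ/2)) := by
    intro x
    rw [hνdef, Measure.map_apply measurable_subtype_coe measurableSet_ball]
    have hpre : (Subtype.val ⁻¹' Metric.ball (f x) (γ/2) : Set (Set.range f))
        = Metric.ball (⟨f x, x, rfl⟩ : Set.range f) (γ/2) :=
      isometry_subtype_coe.preimage_ball (⟨f x, x, rfl⟩ : Set.range f) (γ/2)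
    rw [hpre]
    exact iInf_le _ _
  -- density
  set g : X → Y → ℝ≥0∞ := fun x y => ENNReal.ofReal (Real.exp (-(k * dist y (f x)))) with hgdef
  have hgm : ∀ x, Measurable (g x) := by
    intro x
    exact ((Real.continuous_exp.comp
      ((continuous_const.mul (continuous_id.dist continuous_const)).neg)).measurable).ennreal_ofReal
  have hgle1 : ∀ x y, g x y ≤ 1 := by
    intro x y
    apply ENNReal.ofReal_le_one.2
    exact Real.exp_le_one_iff.2 (neg_nonpos_of_nonneg (by positivity))
  -- normalizer
  set Z : X → ℝ≥0∞ := fun x => ∫⁻ y, g x y ∂ν with hZdef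
  have hZle : ∀ x, Z x ≤ 1 := by
    intro x
    calc Z x ≤ ∫⁻ _, 1 ∂ν := lintegral_mono (hgle1 x)
      _ = 1 := by simp
  have hZtop : ∀ x, Z x ≠ ∞ := fun x => (lt_of_le_of_lt (hZle x) ENNReal.one_lt_top).ne
  set E : ℝ≥0∞ := ENNReal.ofReal (Real.exp (-(k * (γ/2)))) with hEdef
  have hE0 : E ≠ 0 := (ENNReal.ofReal_pos.2 (Real.exp_pos _)).ne'
  have hZge : ∀ x, E * c ≤ Z x := by
    intro x
    calc E * c ≤ E * ν (Metric.ball (f x) (γ/2)) := mul_le_mul_right (hνball x) _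
      _ = ∫⁻ _ in Metric.ball (f x) (γ/2), E ∂ν := (setLIntegral_const _ _).symm
      _ ≤ ∫⁻ y in Metric.ball (f x) (γ/2), g x y ∂ν := by
          apply setLIntegral_mono (hgm x)
          intro y hy
          apply ENNReal.ofReal_le_ofReal
          apply Real.exp_le_exp.2
          have : dist y (f x) < γ/2 := hy
          nlinarith [hk.le]
      _ ≤ Z x := setLIntegral_le_lintegral _ _
  have hZ0 : ∀ x, Z x ≠ 0 := fun x =>
    (lt_of_lt_of_le (ENNReal.mul_pos hE0 hc.ne') (hZge x)).ne'
  -- the mechanism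
  set M : X → Measure Y := fun x => (Z x)⁻¹ • ν.withDensity (g x) with hMdef
  have hMapp : ∀ x T, M x T = (Z x)⁻¹ * (ν.withDensity (g x)) T := by
    intro x T; rw [hMdef]; simp [Measure.smul_apply, smul_eq_mul]
  have hMprob : ∀ x, IsProbabilityMeasure (M x) := by
    intro x
    constructor
    rw [hMapp, withDensity_apply _ MeasurableSet.univ, Measure.restrict_univ]
    exact ENNReal.inv_mul_cancel (hZ0 x) (hZtop x)
  -- pointwise density comparison
  have hcomp : ∀ x z y, g x y ≤ ENNReal.ofReal (Real.exp (k * dist x z)) * g z y := by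
    intro x z y
    rw [hgdef]
    dsimp only
    rw [← ENNReal.ofReal_mul (Real.exp_nonneg _), ← Real.exp_add]
    apply ENNReal.ofReal_le_ofReal
    apply Real.exp_le_exp.2
    have h3 : dist y (f z) ≤ dist y (f x) + dist x z := by
      have t1 := dist_triangle y (f x) (f z)
      have t2 := hf x z
      linarith
    nlinarith [mul_le_mul_of_nonneg_left h3 hk.le]
  have hWcomp : ∀ x z : X, ∀ T : Set Y, MeasurableSet T →
      (ν.withDensity (g x)) T ≤ ENNReal.ofReal (Real.exp (k * dist x z)) * (ν.withDensity (g z)) T := by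
    intro x z T hT
    rw [withDensity_apply _ hT, withDensity_apply _ hT,
      ← lintegral_const_mul _ (hgm z)]
    exact lintegral_mono fun y => hcomp x z y
  have hZcomp : ∀ x z : X, Z z ≤ ENNReal.ofReal (Real.exp (k * dist x z)) * Z x := by
    intro x z
    rw [hZdef]
    dsimp only
    rw [← lintegral_const_mul _ (hgm x)]
    apply lintegral_mono
    intro y
    have := hcomp z x y
    rwa [dist_comm z x] at this
  refine ⟨2*k, by positivity, M, hMprob, ?_, ?_⟩
  · -- differential privacy
    intro x z T hT
    set A : ℝ≥0∞ := ENNReal.ofReal (Real.exp (k * dist x z)) with hAdef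
    have hA0 : A ≠ 0 := (ENNReal.ofReal_pos.2 (Real.exp_pos _)).ne'
    have hAtop : A ≠ ∞ := ENNReal.ofReal_ne_top
    have hinv : (Z x)⁻¹ ≤ A * (Z z)⁻¹ := by
      have h1 : (A * Z x)⁻¹ ≤ (Z z)⁻¹ := ENNReal.inv_le_inv' (hZcomp x z)
      rw [ENNReal.mul_inv (Or.inl hA0) (Or.inl hAtop)] at h1
      calc (Z x)⁻¹ = A * (A⁻¹ * (Z x)⁻¹) := by
            rw [← mul_assoc, ENNReal.mul_inv_cancel hA0 hAtop, one_mul]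
        _ ≤ A * (Z z)⁻¹ := mul_le_mul_right h1 _
    have hAA : ENNReal.ofReal (Real.exp (2*k * dist x z)) = A * A := by
      rw [hAdef, ← ENNReal.ofReal_mul (Real.exp_nonneg _), ← Real.exp_add]
      congr 1
      ring
    calc M x T = (Z x)⁻¹ * (ν.withDensity (g x)) T := hMapp x T
      _ ≤ (A * (Z z)⁻¹) * (A * (ν.withDensity (g z)) T) :=
          mul_le_mul' hinv (hWcomp x z T hT)
      _ = (A * A) * ((Z z)⁻¹ * (ν.withDensity (g z)) T) := by ring
      _ = ENNReal.ofReal (Real.exp (2*k * dist x z)) * M z T := by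
          rw [hAA, hMapp]
  · -- utility
    intro x
    haveI := hMprob x
    have hint : (ν.withDensity (g x)) (Metric.ball (f x) γ)ᶜ
        ≤ ENNReal.ofReal (Real.exp (-(k*γ))) := by
      rw [withDensity_apply _ measurableSet_ball.compl]
      calc ∫⁻ y in (Metric.ball (f x) γ)ᶜ, g x y ∂ν
          ≤ ∫⁻ _ in (Metric.ball (f x) γ)ᶜ, ENNReal.ofReal (Real.exp (-(k*γ))) ∂ν := by
            apply setLIntegral_mono measurable_const
            intro y hy
            apply ENNReal.ofReal_le_ofReal
            apply Real.exp_le_exp.2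
            have : ¬ dist y (f x) < γ := hy
            nlinarith [hk.le, not_lt.1 this]
        _ = ENNReal.ofReal (Real.exp (-(k*γ))) * ν (Metric.ball (f x) γ)ᶜ :=
            setLIntegral_const _ _
        _ ≤ ENNReal.ofReal (Real.exp (-(k*γ))) * 1 := mul_le_mul_right prob_le_one _
        _ = _ := mul_one _
    have hEc0 : E * c ≠ 0 := (ENNReal.mul_pos hE0 hc.ne').ne'
    have hEctop : E * c ≠ ∞ := ENNReal.mul_ne_top ENNReal.ofReal_ne_top hctop
    have h2 : ENNReal.ofReal (Real.exp (-(k*γ))) ≤ ENNReal.ofReal δ * (E * c) := by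
      have hcc : c = ENNReal.ofReal ct := (ENNReal.ofReal_toReal hctop).symm
      rw [hcc, hEdef, ← ENNReal.ofReal_mul (Real.exp_nonneg _),
        ← ENNReal.ofReal_mul hδ0.le]
      apply ENNReal.ofReal_le_ofReal
      have h3 : Real.exp (-(k*γ)) = Real.exp (-(k*(γ/2))) * Real.exp (-(k*(γ/2))) := by
        rw [← Real.exp_add]; ring_nf
      rw [h3]
      nlinarith [hkey, Real.exp_nonneg (-(k*(γ/2)))]
    have hcompl : M x (Metric.ball (f x) γ)ᶜ ≤ ENNReal.ofReal δ := by
      calc M x (Metric.ball (f x) γ)ᶜ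
          = (Z x)⁻¹ * (ν.withDensity (g x)) (Metric.ball (f x) γ)ᶜ := hMapp _ _
        _ ≤ (E * c)⁻¹ * ENNReal.ofReal (Real.exp (-(k*γ))) :=
            mul_le_mul' (ENNReal.inv_le_inv' (hZge x)) hint
        _ ≤ (E * c)⁻¹ * (ENNReal.ofReal δ * (E * c)) := mul_le_mul_right h2 _
        _ = ENNReal.ofReal δ := by
            rw [mul_comm (ENNReal.ofReal δ), ← mul_assoc,
              ENNReal.inv_mul_cancel hEc0 hEctop, one_mul]
    have hsum : M x (Metric.ball (f x) γ) + M x (Metric.ball (f x) γ)ᶜ = 1 := by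
      rw [measure_add_measure_compl measurableSet_ball]
      exact measure_univ
    have h1δ : ENNReal.ofReal (1-δ) + ENNReal.ofReal δ = 1 := by
      rw [← ENNReal.ofReal_add (by linarith) hδ0.le]
      norm_num
    have hle : ENNReal.ofReal (1-δ) + M x (Metric.ball (f x) γ)ᶜ
        ≤ M x (Metric.ball (f x) γ) + M x (Metric.ball (f x) γ)ᶜ := by
      rw [hsum]
      calc ENNReal.ofReal (1-δ) + M x (Metric.ball (f x) γ)ᶜ
          ≤ ENNReal.ofReal (1-δ) + ENNReal.ofReal δ := add_le_add_right hcompl _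
        _ = 1 := h1δ
    exact (ENNReal.add_le_add_iff_right (measure_ne_top _ _)).1 hle

lemma fwd_aux {X Y : Type*}
    [MetricSpace X] [MetricSpace Y] [Nonempty X] [MeasurableSpace Y] [BorelSpace Y]
    (hX : ∀ x z : X, dist x z ≤ 1)
    (f : X → Y) (hf : ∀ x z : X, dist (f x) (f z) ≤ dist x z)
    (H : ∀ γ > (0:ℝ), ∀ δ ∈ Set.Ioo (0:ℝ) 1, ∃ ε > (0:ℝ), ∃ M : X → Measure Y,
      (∀ x, IsProbabilityMeasure (M x)) ∧
      (∀ x z : X, ∀ T : Set Y, MeasurableSet T →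
        M x T ≤ ENNReal.ofReal (Real.exp (ε * dist x z)) * M z T) ∧
      (∀ x : X, ENNReal.ofReal (1 - δ) ≤ M x (Metric.ball (f x) γ))) :
    (∃ μ : Measure (Set.range f), IsProbabilityMeasure μ ∧
      ∀ r > (0:ℝ), 0 < ⨅ y : Set.range f, μ (Metric.ball y r)) := by
  haveI : Nonempty (Set.range f) := ⟨⟨f (Classical.arbitrary X), _, rfl⟩⟩
  -- Step 1: the range is totally bounded
  have htb : TotallyBounded (Set.univ : Set (Set.range f)) := by
    rw [Metric.totallyBounded_iff]
    by_contra hcon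
    push_neg at hcon
    obtain ⟨r, hr, hcov⟩ := hcon
    have hsep : ∀ t : Finset (Set.range f), ∃ y : Set.range f, ∀ c ∈ t, r ≤ dist y c := by
      intro t
      have h1 := hcov ↑t t.finite_toSet
      rw [Set.not_subset] at h1
      obtain ⟨y, -, hy⟩ := h1
      refine ⟨y, fun c hc => ?_⟩
      by_contra hlt
      exact hy (Set.mem_biUnion hc (Metric.mem_ball.2 (lt_of_not_ge hlt)))
    -- get a mechanism for radius r/2, error 1/2
    obtain ⟨ε', hε', M, hMp, hDP, hut⟩ := H (r/2) (by positivity) (1/2) (by norm_num)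
    set x0 : X := Classical.arbitrary X with hx0def
    haveI := hMp x0
    set m : Measure Y := M x0 with hmdef
    set A : ℝ≥0∞ := ENNReal.ofReal (Real.exp ε') with hAdef
    have hA0 : A ≠ 0 := (ENNReal.ofReal_pos.2 (Real.exp_pos _)).ne'
    have hAtop : A ≠ ∞ := ENNReal.ofReal_ne_top
    set c0 : ℝ≥0∞ := A⁻¹ * ENNReal.ofReal (1/2) with hc0def
    have hc0 : 0 < c0 :=
      ENNReal.mul_pos (ENNReal.inv_ne_zero.2 hAtop)
        (ENNReal.ofReal_pos.2 (by norm_num)).ne'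
    have hc0top : c0 ≠ ∞ :=
      ENNReal.mul_ne_top (ENNReal.inv_ne_top.2 hA0) ENNReal.ofReal_ne_top
    have hball : ∀ x : X, c0 ≤ m (Metric.ball (f x) (r/2)) := by
      intro x
      have h1 : ENNReal.ofReal (1/2) ≤ M x (Metric.ball (f x) (r/2)) := by
        have := hut x
        norm_num at this ⊢
        exact this
      have h2 : M x (Metric.ball (f x) (r/2)) ≤ A * m (Metric.ball (f x) (r/2)) := by
        refine le_trans (hDP x x0 _ measurableSet_ball) (mul_le_mul_left ?_ _)
        apply ENNReal.ofReal_le_ofReal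
        apply Real.exp_le_exp.2
        nlinarith [hX x x0, dist_nonneg (x := x) (y := x0), hε'.le]
      calc c0 = A⁻¹ * ENNReal.ofReal (1/2) := rfl
        _ ≤ A⁻¹ * (A * m (Metric.ball (f x) (r/2))) :=
            mul_le_mul_right (le_trans h1 h2) _
        _ = m (Metric.ball (f x) (r/2)) := by
            rw [← mul_assoc, ENNReal.inv_mul_cancel hA0 hAtop, one_mul]
    -- greedy construction of an r-separated sequence of finsets
    choose F hF using hsep
    haveI : DecidableEq (Set.range f) := Classical.decEq _
    set T : ℕ → Finset (Set.range f) := fun n => Nat.rec ∅ (fun _ t => insert (F t) t) n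
      with hTdef
    have hTsucc : ∀ n, T (n+1) = insert (F (T n)) (T n) := fun n => rfl
    have hnotmem : ∀ n, F (T n) ∉ T n := by
      intro n hmem
      have := hF (T n) _ hmem
      simp only [dist_self] at this
      linarith
    have hcard : ∀ n, (T n).card = n := by
      intro n
      induction n with
      | zero => rfl
      | succ n ih => rw [hTsucc, Finset.card_insert_of_notMem (hnotmem n), ih]
    have hpd : ∀ n, ((T n : Set (Set.range f))).PairwiseDisjoint
        (fun c : Set.range f => Metric.ball (c : Y) (r/2)) := by
      intro n
      induction n with
      | zero => simp [hTdef]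
      | succ n ih =>
        rw [hTsucc, Finset.coe_insert]
        apply ih.insert
        intro b hb _
        have hd := hF (T n) b hb
        rw [Subtype.dist_eq] at hd
        exact Metric.ball_disjoint_ball (by linarith)
    -- contradiction with finiteness of m
    obtain ⟨n, hn⟩ := ENNReal.exists_nat_gt (ENNReal.inv_ne_top.2 hc0.ne')
    have hsum : (n : ℝ≥0∞) * c0 ≤ 1 := by
      calc (n : ℝ≥0∞) * c0 = (T n).card • c0 := by rw [hcard n, nsmul_eq_mul]
        _ ≤ ∑ c ∈ T n, m (Metric.ball (↑c : Y) (r/2)) := by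
            apply Finset.card_nsmul_le_sum
            intro c _
            obtain ⟨x, hx⟩ := c.2
            rw [← hx]
            exact hball x
        _ = m (⋃ c ∈ T n, Metric.ball (↑c : Y) (r/2)) :=
            (measure_biUnion_finset (hpd n) (fun c _ => measurableSet_ball)).symm
        _ ≤ m Set.univ := measure_mono (Set.subset_univ _)
        _ = 1 := measure_univ
    have h1 : (1:ℝ≥0∞) < n * c0 := by
      calc (1:ℝ≥0∞) = c0⁻¹ * c0 := (ENNReal.inv_mul_cancel hc0.ne' hc0top).symm
        _ < n * c0 := ENNReal.mul_lt_mul_left hc0.ne' hc0top hn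
    exact absurd h1 (not_lt.2 hsum)
  -- Step 2: build the measure from total boundedness
  haveI : TopologicalSpace.SeparableSpace (Set.range f) :=
    TopologicalSpace.isSeparable_univ_iff.1 htb.isSeparable
  obtain ⟨u, hu⟩ := TopologicalSpace.exists_dense_seq (Set.range f)
  set μ : Measure (Set.range f) :=
    Measure.sum (fun n => ((2:ℝ≥0∞)⁻¹)^(n+1) • Measure.dirac (u n)) with hμdef
  have hμapp : ∀ s : Set (Set.range f), MeasurableSet s →
      μ s = ∑' n, ((2:ℝ≥0∞)⁻¹)^(n+1) * (Measure.dirac (u n)) s := by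
    intro s hs
    rw [hμdef, Measure.sum_apply _ hs]
    simp [Measure.smul_apply, smul_eq_mul]
  have hμprob : IsProbabilityMeasure μ := by
    constructor
    rw [hμapp _ MeasurableSet.univ]
    simp only [measure_univ, mul_one]
    rw [ENNReal.tsum_geometric_add_one, ENNReal.one_sub_inv_two]
    exact ENNReal.mul_inv_cancel (by norm_num) (by norm_num)
  refine ⟨μ, hμprob, ?_⟩
  intro r hr
  obtain ⟨t, htfin, htcov⟩ := Metric.totallyBounded_iff.1 htb (r/2) (by positivity)
  have hpick : ∀ c : Set.range f, ∃ n, u n ∈ Metric.ball c (r/2) := fun c =>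
    hu.exists_mem_open Metric.isOpen_ball ⟨c, Metric.mem_ball_self (by positivity)⟩
  choose nc hnc using hpick
  set N : ℕ := htfin.toFinset.sup nc with hNdef
  set w : ℝ≥0∞ := ((2:ℝ≥0∞)⁻¹)^(N+1) with hwdef
  have hw : 0 < w := ENNReal.pow_pos (by norm_num) _
  refine lt_of_lt_of_le hw (le_iInf fun y => ?_)
  obtain ⟨c, hct, hyc⟩ := Set.mem_iUnion₂.1 (htcov (Set.mem_univ y))
  have hmem : u (nc c) ∈ Metric.ball y r := by
    rw [Metric.mem_ball] at *
    have h1 := hnc c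
    rw [Metric.mem_ball] at h1
    calc dist (u (nc c)) y ≤ dist (u (nc c)) c + dist c y := dist_triangle _ _ _
      _ < r/2 + r/2 := by
          rw [dist_comm c y]
          exact add_lt_add h1 hyc
      _ = r := by ring
  have hwle : w ≤ ((2:ℝ≥0∞)⁻¹)^(nc c + 1) := by
    apply pow_le_pow_right_of_le_one' (by norm_num : (2:ℝ≥0∞)⁻¹ ≤ 1)
    exact add_le_add_left (Finset.le_sup (htfin.mem_toFinset.2 hct)) 1
  calc w ≤ ((2:ℝ≥0∞)⁻¹)^(nc c + 1) := hwle
    _ = (((2:ℝ≥0∞)⁻¹)^(nc c + 1) • Measure.dirac (u (nc c))) (Metric.ball y r) := by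
        rw [Measure.smul_apply, smul_eq_mul,
          Measure.dirac_apply' _ measurableSet_ball, Set.indicator_of_mem hmem]
        simp
    _ ≤ μ (Metric.ball y r) :=
        Measure.le_iff'.1 (Measure.le_sum _ (nc c)) _

/-- for a 1-Lipschitz `f : X → Y` on a nonempty `X` of diameter at most `1`,
`f` is privacy-compatible if and only if there exists a uniformly positive Borel
probability measure on the subspace `f(X)` of `Y`. -/
theorem privacy_compatible_iff_uniformly_positive {X Y : Type*}
    [MetricSpace X] [MetricSpace Y] [Nonempty X] [MeasurableSpace Y] [BorelSpace Y]
    (hX : ∀ x z : X, dist x z ≤ 1)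
    (f : X → Y) (hf : ∀ x z : X, dist (f x) (f z) ≤ dist x z) :
    (∀ γ > (0:ℝ), ∀ δ ∈ Set.Ioo (0:ℝ) 1, ∃ ε > (0:ℝ), ∃ M : X → Measure Y,
      (∀ x, IsProbabilityMeasure (M x)) ∧
      (∀ x z : X, ∀ T : Set Y, MeasurableSet T →
        M x T ≤ ENNReal.ofReal (Real.exp (ε * dist x z)) * M z T) ∧
      (∀ x : X, ENNReal.ofReal (1 - δ) ≤ M x (Metric.ball (f x) γ))) ↔
    (∃ μ : Measure (Set.range f), IsProbabilityMeasure μ ∧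
      ∀ r > (0:ℝ), 0 < ⨅ y : Set.range f, μ (Metric.ball y r)) := by
  constructor
  · exact fwd_aux hX f hf
  · rintro ⟨μ, hμp, hpos⟩
    exact bwd_aux hX f hf μ hμp hpos
end

section
/- Let (X, ρ) and (Y, σ) be metric spaces, let f : X → Y be 1-Lipschitz, and let μ be a uniformly positive Borel probability measure on Y. Fix γ > 0 and δ ∈ (0,1), set m = inf_{y ∈ Y} μ(B(y, γ/2)) (so m > 0; assume δ·m < 1), and let ε = (4/γ)·ln(1/(δ·m)). Then there exists a mechanism M : X → (Borel probability measures on Y) — namely the conventional exponential mechanism C^{μ;β} with β = ε/2 — that simultaneously achieves ε-differential privacy and (γ,δ)-utility: M_x(T) ≤ e^{ε·ρ(x,z)}·M_z(T) for all x, z ∈ X and Borel T ⊆ Y, and M_x(B(f(x),γ)) ≥ 1 − δ for all x ∈ X. -/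
open MeasureTheory

/-- for a 1-Lipschitz `f`, a uniformly positive Borel probability measure
`μ` on `Y`, `γ > 0`, `δ ∈ (0,1)`, `m = inf_y μ(B(y,γ/2))` (with `m > 0`, `δ·m < 1`) and
`ε = (4/γ)·ln(1/(δ·m))`, the conventional exponential mechanism with `β = ε/2`
simultaneously achieves `ε`-differential privacy and `(γ,δ)`-utility. -/
theorem exp_mech_privacy_and_utility {X Y : Type*} [MetricSpace X] [MetricSpace Y]
    [MeasurableSpace Y] [BorelSpace Y]
    (f : X → Y) (hf : ∀ x z : X, dist (f x) (f z) ≤ dist x z)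
    (μ : Measure Y) [IsProbabilityMeasure μ]
    (hμ : ∀ r > (0:ℝ), 0 < ⨅ y : Y, μ (Metric.ball y r))
    (γ δ : ℝ) (hγ : 0 < γ) (hδ : δ ∈ Set.Ioo (0:ℝ) 1)
    (m : ℝ) (hm : m = (⨅ y : Y, μ (Metric.ball y (γ / 2))).toReal)
    (hm0 : 0 < m) (hδm : δ * m < 1)
    (ε : ℝ) (hε : ε = (4 / γ) * Real.log (1 / (δ * m))) :
    ∃ M : X → Measure Y,
      (∀ x, IsProbabilityMeasure (M x)) ∧
      (∀ x : X, ∀ T : Set Y, MeasurableSet T →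
        M x T = (∫⁻ y in T, ENNReal.ofReal (Real.exp (-(ε / 2) * dist (f x) y)) ∂μ) /
          (∫⁻ y, ENNReal.ofReal (Real.exp (-(ε / 2) * dist (f x) y)) ∂μ)) ∧
      (∀ x z : X, ∀ T : Set Y, MeasurableSet T →
        M x T ≤ ENNReal.ofReal (Real.exp (ε * dist x z)) * M z T) ∧
      (∀ x : X, ENNReal.ofReal (1 - δ) ≤ M x (Metric.ball (f x) γ)) := by
  obtain ⟨hδ0, hδ1⟩ := hδ
  have hδm0 : 0 < δ * m := mul_pos hδ0 hm0
  set L : ℝ := Real.log (δ * m) with hLdef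
  have hL : L < 0 := Real.log_neg hδm0 hδm
  have hε0 : 0 ≤ ε := by
    rw [hε, one_div, Real.log_inv]
    have : 0 ≤ -L := by linarith
    positivity
  -- the density
  set g : X → Y → ENNReal :=
    fun x y => ENNReal.ofReal (Real.exp (-(ε / 2) * dist (f x) y)) with hgdef
  have hgmeas : ∀ x, Measurable (g x) := by
    intro x
    apply Measurable.ennreal_ofReal
    exact (Real.continuous_exp.comp
      ((continuous_const.mul (continuous_const.dist continuous_id)))).measurable
  have hgle1 : ∀ x y, g x y ≤ 1 := by
    intro x y
    simp only [hgdef]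
    rw [ENNReal.ofReal_le_one]
    apply Real.exp_le_one_iff.mpr
    have := dist_nonneg (x := f x) (y := y)
    nlinarith
  -- the normalizing constant
  set Z : X → ENNReal := fun x => ∫⁻ y, g x y ∂μ with hZdef
  have hZle1 : ∀ x, Z x ≤ 1 := by
    intro x
    calc Z x ≤ ∫⁻ _, 1 ∂μ := lintegral_mono fun y => hgle1 x y
      _ = 1 := by simp
  have hZtop : ∀ x, Z x ≠ ⊤ := fun x => ne_top_of_le_ne_top ENNReal.one_ne_top (hZle1 x)
  have hZ0 : ∀ x, Z x ≠ 0 := by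
    intro x
    have : 0 < Z x := by
      rw [hZdef, lintegral_pos_iff_support (hgmeas x)]
      have hsupp : Function.support (g x) = Set.univ := by
        ext y
        simp only [Function.mem_support, Set.mem_univ, iff_true, hgdef]
        exact (ENNReal.ofReal_pos.mpr (Real.exp_pos _)).ne'
      rw [hsupp]
      simp
    exact this.ne'
  have hμle1 : ∀ s : Set Y, μ s ≤ 1 := fun s => prob_le_one
  have hμfin : ∀ s : Set Y, μ s ≠ ⊤ :=
    fun s => (lt_of_le_of_lt (hμle1 s) ENNReal.one_lt_top).ne
  -- the mechanism
  set M : X → Measure Y := fun x => (Z x)⁻¹ • μ.withDensity (g x) with hMdef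
  have hMT : ∀ x (T : Set Y), MeasurableSet T → M x T = (∫⁻ y in T, g x y ∂μ) / Z x := by
    intro x T hT
    rw [hMdef]
    simp only [Measure.smul_apply, smul_eq_mul, withDensity_apply _ hT,
      ENNReal.div_eq_inv_mul]
  have hprob : ∀ x, IsProbabilityMeasure (M x) := by
    intro x
    constructor
    rw [hMT x Set.univ MeasurableSet.univ, setLIntegral_univ]
    exact ENNReal.div_self (hZ0 x) (hZtop x)
  have hpriv : ∀ x z : X, ∀ T : Set Y, MeasurableSet T →
      M x T ≤ ENNReal.ofReal (Real.exp (ε * dist x z)) * M z T := by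
    intro x z T hT
    set c : ENNReal := ENNReal.ofReal (Real.exp ((ε / 2) * dist x z)) with hcdef
    have hc0 : c ≠ 0 := (ENNReal.ofReal_pos.mpr (Real.exp_pos _)).ne'
    have hctop : c ≠ ⊤ := ENNReal.ofReal_ne_top
    have hkey : ∀ x' z' : X, ∀ y, g x' y ≤ ENNReal.ofReal (Real.exp ((ε / 2) * dist x' z')) * g z' y := by
      intro x' z' y
      rw [hgdef, ← ENNReal.ofReal_mul (Real.exp_pos _).le, ← Real.exp_add]
      apply ENNReal.ofReal_le_ofReal
      apply Real.exp_le_exp.mpr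
      have h1 := hf x' z'
      have h2 := abs_dist_sub_le (f x') (f z') y
      have h3 := (abs_le.mp h2).2
      have h4 := (abs_le.mp h2).1
      nlinarith
    have hN : ∫⁻ y in T, g x y ∂μ ≤ c * ∫⁻ y in T, g z y ∂μ := by
      calc ∫⁻ y in T, g x y ∂μ ≤ ∫⁻ y in T, c * g z y ∂μ :=
            lintegral_mono fun y => hkey x z y
        _ = c * ∫⁻ y in T, g z y ∂μ := lintegral_const_mul c (hgmeas z)
    have hZZ : Z z ≤ c * Z x := by
      have : ∀ y, g z y ≤ c * g x y := by
        intro y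
        have := hkey z x y
        rwa [dist_comm z x] at this
      calc Z z ≤ ∫⁻ y, c * g x y ∂μ := lintegral_mono this
        _ = c * Z x := lintegral_const_mul c (hgmeas x)
    have hinv : (Z x)⁻¹ ≤ c * (Z z)⁻¹ := by
      have heq : c * (Z z)⁻¹ = (c⁻¹ * Z z)⁻¹ := by
        rw [ENNReal.mul_inv (Or.inl (ENNReal.inv_ne_zero.mpr hctop))
          (Or.inr (hZ0 z)), inv_inv]
      rw [heq, ENNReal.inv_le_inv]
      calc c⁻¹ * Z z ≤ c⁻¹ * (c * Z x) := mul_le_mul_right hZZ _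
        _ = Z x := by rw [← mul_assoc, ENNReal.inv_mul_cancel hc0 hctop, one_mul]
    have hcc : c * c = ENNReal.ofReal (Real.exp (ε * dist x z)) := by
      rw [hcdef, ← ENNReal.ofReal_mul (Real.exp_pos _).le, ← Real.exp_add]
      ring_nf
    calc M x T = (∫⁻ y in T, g x y ∂μ) * (Z x)⁻¹ := by
          rw [hMT x T hT, ENNReal.div_eq_inv_mul, mul_comm]
      _ ≤ (c * ∫⁻ y in T, g z y ∂μ) * (c * (Z z)⁻¹) := mul_le_mul' hN hinv
      _ = (c * c) * ((∫⁻ y in T, g z y ∂μ) * (Z z)⁻¹) := by ring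
      _ = ENNReal.ofReal (Real.exp (ε * dist x z)) * M z T := by
          rw [hcc, hMT z T hT, ENNReal.div_eq_inv_mul, mul_comm (Z z)⁻¹ _]
  have hutil : ∀ x : X, ENNReal.ofReal (1 - δ) ≤ M x (Metric.ball (f x) γ) := by
    intro x
    have hεγ : ε * γ = -4 * L := by
      rw [hε, one_div, Real.log_inv, ← hLdef]
      field_simp
    have he2 : Real.exp (-(ε / 2) * (γ / 2)) = δ * m := by
      have h : -(ε / 2) * (γ / 2) = L := by linear_combination (-1/4) * hεγ
      rw [h, hLdef, Real.exp_log hδm0]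
    have he1 : Real.exp (-(ε / 2) * γ) = (δ * m) * (δ * m) := by
      have h : -(ε / 2) * γ = L + L := by linear_combination (-1/2) * hεγ
      rw [h, Real.exp_add, hLdef, Real.exp_log hδm0]
    set B : Set Y := Metric.ball (f x) γ with hBdef
    have hBmeas : MeasurableSet B := Metric.isOpen_ball.measurableSet
    have hμBc : μ Bᶜ ≤ 1 := hμle1 _
    have hballtop : μ (Metric.ball (f x) (γ / 2)) ≠ ⊤ := hμfin _
    -- numerator bound on the complement
    have hNum : ∫⁻ y in Bᶜ, g x y ∂μ ≤ ENNReal.ofReal (Real.exp (-(ε / 2) * γ)) := by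
      calc ∫⁻ y in Bᶜ, g x y ∂μ
          ≤ ∫⁻ _ in Bᶜ, ENNReal.ofReal (Real.exp (-(ε / 2) * γ)) ∂μ := by
            apply setLIntegral_mono measurable_const
            intro y hy
            have hyd : γ ≤ dist (f x) y := by
              have : ¬ dist y (f x) < γ := by simpa [hBdef, Metric.mem_ball] using hy
              rw [dist_comm] at this
              linarith [not_lt.mp this]
            apply ENNReal.ofReal_le_ofReal
            apply Real.exp_le_exp.mpr
            nlinarith
        _ = ENNReal.ofReal (Real.exp (-(ε / 2) * γ)) * μ Bᶜ := setLIntegral_const _ _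
        _ ≤ ENNReal.ofReal (Real.exp (-(ε / 2) * γ)) * 1 :=
            mul_le_mul_right hμBc _
        _ = ENNReal.ofReal (Real.exp (-(ε / 2) * γ)) := mul_one _
    -- denominator lower bound
    have hofm : ENNReal.ofReal m ≤ μ (Metric.ball (f x) (γ / 2)) := by
      have hle : (⨅ y : Y, μ (Metric.ball y (γ / 2))) ≤ μ (Metric.ball (f x) (γ / 2)) :=
        iInf_le _ (f x)
      have hnetop : (⨅ y : Y, μ (Metric.ball y (γ / 2))) ≠ ⊤ :=
        ne_top_of_le_ne_top hballtop hle
      rw [hm, ENNReal.ofReal_toReal hnetop]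
      exact hle
    have hDen : ENNReal.ofReal (Real.exp (-(ε / 2) * (γ / 2))) * ENNReal.ofReal m ≤ Z x := by
      calc ENNReal.ofReal (Real.exp (-(ε / 2) * (γ / 2))) * ENNReal.ofReal m
          ≤ ENNReal.ofReal (Real.exp (-(ε / 2) * (γ / 2))) * μ (Metric.ball (f x) (γ / 2)) :=
            mul_le_mul_right hofm _
        _ = ∫⁻ _ in Metric.ball (f x) (γ / 2),
              ENNReal.ofReal (Real.exp (-(ε / 2) * (γ / 2))) ∂μ := (setLIntegral_const _ _).symm
        _ ≤ ∫⁻ y in Metric.ball (f x) (γ / 2), g x y ∂μ := by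
            apply setLIntegral_mono (hgmeas x)
            intro y hy
            have hyd : dist (f x) y < γ / 2 := by
              rw [dist_comm]; simpa [Metric.mem_ball] using hy
            apply ENNReal.ofReal_le_ofReal
            apply Real.exp_le_exp.mpr
            nlinarith [dist_nonneg (x := f x) (y := y)]
        _ ≤ Z x := setLIntegral_le_lintegral _ _
    -- complement bound
    have hcompl : M x Bᶜ ≤ ENNReal.ofReal δ := by
      rw [hMT x Bᶜ hBmeas.compl]
      have hdpos : 0 < Real.exp (-(ε / 2) * (γ / 2)) * m :=
        mul_pos (Real.exp_pos _) hm0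
      calc (∫⁻ y in Bᶜ, g x y ∂μ) / Z x
          ≤ ENNReal.ofReal (Real.exp (-(ε / 2) * γ)) /
            (ENNReal.ofReal (Real.exp (-(ε / 2) * (γ / 2))) * ENNReal.ofReal m) :=
            ENNReal.div_le_div hNum hDen
        _ = ENNReal.ofReal (Real.exp (-(ε / 2) * γ) /
              (Real.exp (-(ε / 2) * (γ / 2)) * m)) := by
            rw [← ENNReal.ofReal_mul (Real.exp_pos _).le,
              ENNReal.ofReal_div_of_pos hdpos]
        _ = ENNReal.ofReal δ := by
            congr 1
            rw [he1, he2]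
            field_simp
    -- conclude
    have hMxuniv : M x Set.univ = 1 := (hprob x).measure_univ
    have hMxB_le : M x B ≤ 1 := by
      rw [← hMxuniv]; exact measure_mono (Set.subset_univ _)
    have hMcompl : M x Bᶜ = 1 - M x B := by
      rw [measure_compl hBmeas (lt_of_le_of_lt hMxB_le ENNReal.one_lt_top).ne, hMxuniv]
    have h1 : (1 : ENNReal) - M x B ≤ ENNReal.ofReal δ := by
      rw [← hMcompl]; exact hcompl
    have h2 : (1 : ENNReal) ≤ ENNReal.ofReal δ + M x B := tsub_le_iff_right.mp h1
    have h3 : ENNReal.ofReal (1 - δ) = 1 - ENNReal.ofReal δ := by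
      rw [ENNReal.ofReal_sub _ hδ0.le, ENNReal.ofReal_one]
    rw [h3]
    exact tsub_le_iff_left.mpr h2
  exact ⟨M, hprob, fun x T hT => hMT x T hT, hpriv, hutil⟩
end
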